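/- (John's theorem) Let K ⊂ ℝⁿ be a compact convex set with nonempty interior such that K = -K. Then there exists an invertible linear transformation T : ℝⁿ → ℝⁿ such that B_n ⊆ T(K) ⊆ √n·B_n, where B_n is the closed Euclidean unit ball in ℝⁿ. -/
import Mathlib


open Set Metric
open scoped RealInnerProductSpace


set_option maxHeartbeats 1000000 in
lemma john_key_t (s a bb c W2 : ℝ) (hs : 1 < s) (ha : 1 ≤ a) (hbb0 : 0 ≤ bb)
    (hbb1 : bb ≤ 1) (hcon : a^2 + bb^2*(s^2-1) ≤ s^2) (hc0 : 0 ≤ c)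
    (hW : 0 ≤ W2) (hcw : c^2 + W2 ≤ 1) :
    ∃ t, 0 ≤ t ∧ t ≤ 1 ∧ (a*c - t*s)^2 + bb^2*W2 ≤ (1-t)^2 := by
  have hs0 : (0:ℝ) < s := by linarith
  have ha0 : (0:ℝ) < a := by linarith
  have hD : (0:ℝ) < s^2 - 1 := by nlinarith
  have ha2 : a^2 ≤ s^2 := by nlinarith [mul_nonneg (sq_nonneg bb) hD.le]
  have has : a ≤ s := by nlinarith
  have hc1 : c ≤ 1 := by nlinarith
  have hW2 : bb^2*W2 ≤ bb^2*(1-c^2) := by nlinarith [sq_nonneg bb]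
  by_cases h : a*c*s ≤ 1
  · refine ⟨0, le_refl _, by norm_num, ?_⟩
    have key : a^2*c^2 + bb^2*(1-c^2) ≤ 1 := by
      rcases le_or_gt (a^2) (bb^2) with hab | hab
      · nlinarith
      · have h1 : (a*c*s)^2 ≤ 1 := by nlinarith [mul_nonneg (mul_nonneg ha0.le hc0) hs0.le]
        have h2 : a^2 - bb^2 ≤ a^2*s^2*(1-bb^2) := by
          nlinarith [mul_nonneg (by nlinarith : (0:ℝ) ≤ a^2-1)
            (mul_nonneg (sq_nonneg s) (by nlinarith : (0:ℝ) ≤ 1-bb^2))]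
        have h5 : (0:ℝ) < a^2*s^2 := by positivity
        have h4 : c^2*(a^2-bb^2)*(a^2*s^2) ≤ (1-bb^2)*(a^2*s^2) := by
          have e1 : c^2*(a^2-bb^2)*(a^2*s^2) = (a^2-bb^2)*((a*c*s)^2) := by ring
          have e2 : (a^2-bb^2)*((a*c*s)^2) ≤ (a^2-bb^2)*1 :=
            mul_le_mul_of_nonneg_left h1 (by linarith)
          rw [e1]
          calc (a^2-bb^2)*((a*c*s)^2) ≤ (a^2-bb^2)*1 := e2
            _ ≤ (1-bb^2)*(a^2*s^2) := by linarith
        have h3 : c^2*(a^2-bb^2) ≤ 1 - bb^2 := le_of_mul_le_mul_right h4 h5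
        nlinarith
    nlinarith
  · push_neg at h
    refine ⟨(a*c*s - 1)/(s^2-1), div_nonneg (by linarith) hD.le, ?_, ?_⟩
    · rw [div_le_one hD]
      have h8 : a*c ≤ s := by
        have h9 := mul_le_mul has hc1 hc0 hs0.le
        simpa using h9
      have h9 : (a*c)*s ≤ s*s := mul_le_mul_of_nonneg_right h8 hs0.le
      nlinarith [h9]
    · set t := (a*c*s - 1)/(s^2-1) with ht
      have hident : (1-t)^2 - ((a*c - t*s)^2 + bb^2*(1-c^2))
          = ((s*c-a)^2 + (s^2 - a^2 - bb^2*(s^2-1))*(1-c^2))/(s^2-1) := by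
        rw [ht]; field_simp; ring
      have hnum : 0 ≤ (s*c-a)^2 + (s^2 - a^2 - bb^2*(s^2-1))*(1-c^2) := by
        have h6 : 0 ≤ (s^2 - a^2 - bb^2*(s^2-1)) := by nlinarith
        nlinarith [sq_nonneg (s*c-a), mul_nonneg h6 (by nlinarith : (0:ℝ) ≤ 1-c^2)]
      have h7 := div_nonneg hnum hD.le
      nlinarith [h7, hident]

set_option maxHeartbeats 1000000 in
lemma john_key_det (n : ℕ) (hn : 0 < n) (s : ℝ) (hs2 : (n:ℝ) < s^2) (hs1 : 1 < s) :
    ∃ a bb : ℝ, 1 ≤ a ∧ 0 ≤ bb ∧ bb ≤ 1 ∧ a^2 + bb^2*(s^2-1) ≤ s^2 ∧ 1 < a * bb^(n-1) := by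
  set N : ℝ := (n:ℝ) with hN
  have hN1 : 1 ≤ N := by
    have h1n : (1:ℕ) ≤ n := hn
    rw [hN]; exact_mod_cast h1n
  have hD : (0:ℝ) < s^2 - 1 := by nlinarith
  set τ : ℝ := (s^2 - N)/(2*N*(s^2-1)) with hτ
  have hτ0 : 0 < τ := div_pos (by linarith) (by positivity)
  have hτh : τ ≤ 1/2 := by
    rw [hτ, div_le_iff₀ (by positivity)]
    nlinarith [mul_le_mul_of_nonneg_right hN1 hD.le]
  have hA2 : 1 ≤ 1 + (s^2-1)*τ := by nlinarith [mul_pos hD hτ0]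
  have hB0 : (0:ℝ) ≤ 1 - τ := by linarith
  refine ⟨Real.sqrt (1 + (s^2-1)*τ), Real.sqrt (1-τ), ?_, Real.sqrt_nonneg _, ?_, ?_, ?_⟩
  · exact Real.one_le_sqrt.mpr (by linarith)
  · exact Real.sqrt_le_one.mpr (by linarith)
  · rw [Real.sq_sqrt (by linarith), Real.sq_sqrt hB0]; nlinarith
  · have key1 : 1 < (1 + (s^2-1)*τ)*(1-(N-1)*τ) := by
      rw [hτ]
      have hden : (0:ℝ) < 2*N*(s^2-1) := by positivity
      rw [show (1 + (s^2-1)*((s^2-N)/(2*N*(s^2-1))))*(1-(N-1)*((s^2-N)/(2*N*(s^2-1))))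
          = ((2*N*(s^2-1) + (s^2-1)*(s^2-N))*(2*N*(s^2-1) - (N-1)*(s^2-N)))
            /((2*N*(s^2-1))*(2*N*(s^2-1))) by field_simp]
      rw [lt_div_iff₀ (by positivity)]
      nlinarith [mul_pos (mul_pos (mul_pos (show (0:ℝ) < (s^2-N) by linarith)
        (show (0:ℝ) < (s^2-N) by linarith)) hD) (show (0:ℝ) < N+1 by linarith)]
    have hber : 1 + ((n-1:ℕ):ℝ)*(-τ) ≤ (1+(-τ))^(n-1) :=
      one_add_mul_le_pow (by linarith) (n-1)
    have hcast : ((n-1:ℕ):ℝ) = N - 1 := by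
      rw [hN]; push_cast [Nat.cast_sub hn]; ring
    have hber' : 1 - (N-1)*τ ≤ (1-τ)^(n-1) := by
      rw [hcast] at hber
      calc 1 - (N-1)*τ = 1 + (N-1)*(-τ) := by ring
        _ ≤ (1+(-τ))^(n-1) := hber
        _ = (1-τ)^(n-1) := by ring_nf
    have hP : 1 < (1 + (s^2-1)*τ) * (1-τ)^(n-1) := by
      calc (1:ℝ) < (1 + (s^2-1)*τ)*(1-(N-1)*τ) := key1
        _ ≤ (1 + (s^2-1)*τ) * (1-τ)^(n-1) :=
          mul_le_mul_of_nonneg_left hber' (by linarith)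
    have hsq : (Real.sqrt (1 + (s^2-1)*τ) * Real.sqrt (1-τ)^(n-1))^2
        = (1 + (s^2-1)*τ) * (1-τ)^(n-1) := by
      rw [mul_pow, ← pow_mul, mul_comm (n-1) 2, pow_mul,
        Real.sq_sqrt (by linarith), Real.sq_sqrt hB0]
    nlinarith [hsq, hP, mul_nonneg (Real.sqrt_nonneg (1 + (s^2-1)*τ))
      (pow_nonneg (Real.sqrt_nonneg (1-τ)) (n-1))]

set_option maxHeartbeats 1000000 in
lemma john_M (n : ℕ) (hn : 0 < n) (v : EuclideanSpace ℝ (Fin n)) (hv : ‖v‖ = 1) (a bb : ℝ) :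
    ∃ M : EuclideanSpace ℝ (Fin n) →ₗ[ℝ] EuclideanSpace ℝ (Fin n),
      (∀ y, M y = (a * ⟪v, y⟫) • v + bb • (y - ⟪v, y⟫ • v)) ∧
      LinearMap.det M = a * bb^(n-1) := by
  haveI : NeZero n := ⟨hn.ne'⟩
  refine ⟨bb • LinearMap.id + (a - bb) •
    ((innerSL ℝ v : EuclideanSpace ℝ (Fin n) →L[ℝ] ℝ) : EuclideanSpace ℝ (Fin n) →ₗ[ℝ] ℝ).smulRight v, fun y => ?_, ?_⟩
  · simp only [LinearMap.add_apply, LinearMap.smul_apply, LinearMap.id_apply,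
      LinearMap.smulRight_apply, ContinuousLinearMap.coe_coe, innerSL_apply_apply]
    module
  · -- orthonormal basis with b 0 = v
    have hON : Orthonormal ℝ (({0} : Set (Fin n)).restrict (fun _ : Fin n => v)) := by
      constructor
      · intro i; exact hv
      · intro i j hij
        exfalso
        exact hij (Subtype.ext (by
          have hi := i.2; have hj := j.2
          simp only [Set.mem_singleton_iff] at hi hj
          rw [hi, hj]))
    obtain ⟨b, hb⟩ := hON.exists_orthonormalBasis_extension_of_card_eq
      (by simp [finrank_euclideanSpace_fin]) 
    have hb0 : b 0 = v := hb 0 rfl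
    have hmat : LinearMap.toMatrix b.toBasis b.toBasis
        (bb • LinearMap.id + (a - bb) •
          ((innerSL ℝ v : EuclideanSpace ℝ (Fin n) →L[ℝ] ℝ) : EuclideanSpace ℝ (Fin n) →ₗ[ℝ] ℝ).smulRight v)
        = Matrix.diagonal (fun i => if i = 0 then a else bb) := by
      ext i j
      rw [LinearMap.toMatrix_apply]
      rw [OrthonormalBasis.coe_toBasis_repr_apply, OrthonormalBasis.repr_apply_apply]
      simp only [LinearMap.add_apply, LinearMap.smul_apply, LinearMap.id_apply,
        LinearMap.smulRight_apply, ContinuousLinearMap.coe_coe, innerSL_apply_apply,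
        OrthonormalBasis.coe_toBasis]
      rw [inner_add_right, inner_smul_right, inner_smul_right, inner_smul_right]
      have horth := orthonormal_iff_ite.mp b.orthonormal
      rw [← hb0, horth, horth i 0, horth 0 j]
      rw [Matrix.diagonal_apply]
      by_cases hij : i = j <;> by_cases hi0 : i = 0 <;> by_cases hj0 : j = 0 <;>
        simp_all <;> ring
    rw [← LinearMap.det_toMatrix b.toBasis, hmat, Matrix.det_diagonal]
    have : (fun i : Fin n => if i = 0 then a else bb)
        = Function.update (fun _ : Fin n => bb) 0 a := by
      funext i; rw [Function.update_apply]
    rw [this, Finset.prod_update_of_mem (Finset.mem_univ 0), Finset.prod_const]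
    congr 1
    rw [Finset.card_sdiff_of_subset (by simp), Finset.card_univ, Fintype.card_fin,
      Finset.card_singleton]
set_option maxHeartbeats 2000000

/-- **John's theorem** (symmetric case): for every origin-symmetric convex body
`K ⊆ ℝⁿ` there is an invertible linear map `T` with `B_n ⊆ T(K) ⊆ √n · B_n`. -/


theorem john_theorem (n : ℕ) (hn : 0 < n) (K : Set (EuclideanSpace ℝ (Fin n)))
    (hKcompact : IsCompact K) (hKconv : Convex ℝ K) (hKint : (interior K).Nonempty)
    (hKsymm : K = -K) :
    ∃ T : EuclideanSpace ℝ (Fin n) ≃ₗ[ℝ] EuclideanSpace ℝ (Fin n),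
      closedBall (0 : EuclideanSpace ℝ (Fin n)) 1 ⊆ T '' K ∧
        T '' K ⊆ closedBall (0 : EuclideanSpace ℝ (Fin n)) (Real.sqrt n) := by
  classical
  -- 0 is in the interior of K
  have h0K : (0 : EuclideanSpace ℝ (Fin n)) ∈ interior K := by
    obtain ⟨x, hx⟩ := hKint
    have hx' : -x ∈ interior K := by
      rw [mem_interior_iff_mem_nhds] at hx ⊢
      have h4 : Filter.Tendsto (fun y : EuclideanSpace ℝ (Fin n) => -y) (nhds (-x)) (nhds x) := by
        simpa using (continuous_neg.tendsto (-x))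
      have h5 := h4 hx
      rw [Filter.mem_map] at h5
      have h6 : (fun y : EuclideanSpace ℝ (Fin n) => -y) ⁻¹' K = K := by
        ext z
        rw [Set.mem_preimage, ← Set.mem_neg, ← hKsymm]
      rwa [h6] at h5
    have h2 := hKconv.interior hx hx' (by norm_num : (0:ℝ) ≤ 1/2)
      (by norm_num : (0:ℝ) ≤ 1/2) (by norm_num)
    simpa using h2
  obtain ⟨ε, hε0, hεK⟩ : ∃ ε > 0, closedBall (0 : EuclideanSpace ℝ (Fin n)) ε ⊆ K := by
    obtain ⟨ε, hε0, hball⟩ := Metric.mem_nhds_iff.mp (mem_interior_iff_mem_nhds.mp h0K)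
    refine ⟨ε/2, by linarith, fun x hx => hball ?_⟩
    have := mem_closedBall.mp hx
    exact mem_ball.mpr (lt_of_le_of_lt this (by linarith))
  obtain ⟨R, hR⟩ := hKcompact.isBounded.subset_closedBall 0
  have hR0 : 0 ≤ R := by
    have h0 : (0 : EuclideanSpace ℝ (Fin n)) ∈ K := interior_subset h0K
    have := hR h0
    simpa using this
  -- the compact set of admissible maps
  set S : Set (EuclideanSpace ℝ (Fin n) →L[ℝ] EuclideanSpace ℝ (Fin n)) :=
    {T | ∀ x ∈ closedBall (0 : EuclideanSpace ℝ (Fin n)) 1, T x ∈ K} with hS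
  have hSclosed : IsClosed S := by
    have : S = ⋂ x ∈ closedBall (0 : EuclideanSpace ℝ (Fin n)) 1,
        {T : EuclideanSpace ℝ (Fin n) →L[ℝ] EuclideanSpace ℝ (Fin n) | T x ∈ K} := by
      ext T; simp [hS]
    rw [this]
    refine isClosed_biInter fun x _ => ?_
    exact hKcompact.isClosed.preimage (ContinuousLinearMap.apply ℝ
      (EuclideanSpace ℝ (Fin n)) x).continuous
  have hSbdd : Bornology.IsBounded S := by
    rw [Metric.isBounded_iff_subset_closedBall 0]
    refine ⟨R, fun T hT => ?_⟩
    rw [mem_closedBall, dist_zero_right]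
    refine ContinuousLinearMap.opNorm_le_bound T hR0 fun x => ?_
    rcases eq_or_ne x 0 with rfl | hx0
    · simp
    · have hxn : 0 < ‖x‖ := norm_pos_iff.mpr hx0
      have h1 : (‖x‖⁻¹ • x) ∈ closedBall (0 : EuclideanSpace ℝ (Fin n)) 1 := by
        rw [mem_closedBall, dist_zero_right, norm_smul, norm_inv, norm_norm]
        rw [inv_mul_cancel₀ hxn.ne']
      have h2 := hR (hT _ h1)
      rw [mem_closedBall, dist_zero_right, map_smul, norm_smul, norm_inv, norm_norm] at h2
      rw [inv_mul_le_iff₀ hxn] at h2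
      linarith [h2]
  have hScompact : IsCompact S := Metric.isCompact_of_isClosed_isBounded hSclosed hSbdd
  -- a first member with positive determinant
  have hmemε : (ε • (ContinuousLinearMap.id ℝ (EuclideanSpace ℝ (Fin n)))) ∈ S := by
    intro x hx
    refine hεK ?_
    rw [mem_closedBall, dist_zero_right] at hx ⊢
    simp only [ContinuousLinearMap.smul_apply, ContinuousLinearMap.id_apply, norm_smul,
      Real.norm_eq_abs, abs_of_pos hε0]
    nlinarith [norm_nonneg x]
  have hdetε : |(ε • (ContinuousLinearMap.id ℝ (EuclideanSpace ℝ (Fin n)))).det| = ε ^ n := by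
    rw [ContinuousLinearMap.det]
    simp only [ContinuousLinearMap.coe_smul, ContinuousLinearMap.coe_id]
    rw [LinearMap.det_smul, LinearMap.det_id, mul_one,
      finrank_euclideanSpace_fin, abs_pow, abs_of_pos hε0]
  -- maximize |det|
  obtain ⟨T₀, hT₀S, hT₀max⟩ := hScompact.exists_isMaxOn ⟨_, hmemε⟩
    (((ContinuousLinearMap.continuous_det).abs).continuousOn)
  have hT₀det : 0 < |T₀.det| := by
    have hle : |(ε • (ContinuousLinearMap.id ℝ (EuclideanSpace ℝ (Fin n)))).det| ≤ |T₀.det| :=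
      hT₀max hmemε
    rw [hdetε] at hle
    calc (0:ℝ) < ε ^ n := by positivity
      _ ≤ |T₀.det| := hle
  have hdet_ne : LinearMap.det (T₀ : EuclideanSpace ℝ (Fin n) →ₗ[ℝ] EuclideanSpace ℝ (Fin n)) ≠ 0 := by
    intro h
    rw [ContinuousLinearMap.det] at hT₀det
    rw [h] at hT₀det
    simp at hT₀det
  set Teq := LinearMap.equivOfDetNeZero _ hdet_ne with hTeq
  have hTeq_app : ∀ x, Teq x = T₀ x := fun x => rfl
  refine ⟨Teq.symm, ?_, ?_⟩
  case _ =>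
    intro x hx
    exact ⟨T₀ x, hT₀S x hx, by rw [← hTeq_app x, LinearEquiv.symm_apply_apply]⟩
  have hgoal1 : closedBall (0 : EuclideanSpace ℝ (Fin n)) 1 ⊆ ⇑Teq.symm '' K := by
    intro x hx
    exact ⟨T₀ x, hT₀S x hx, by rw [← hTeq_app x, LinearEquiv.symm_apply_apply]⟩
  by_contra hcon
  obtain ⟨p, hpK, hp⟩ := not_subset.mp hcon
  rw [mem_closedBall, dist_zero_right, not_le] at hp
  set s := ‖p‖ with hs_def
  have hsqrt1 : (1:ℝ) ≤ Real.sqrt n := Real.one_le_sqrt.mpr (by exact_mod_cast hn)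
  have hs1 : 1 < s := lt_of_le_of_lt hsqrt1 hp
  have hs0 : (0:ℝ) < s := by linarith
  have hs2 : (n:ℝ) < s^2 := (Real.sqrt_lt' hs0).mp hp
  obtain ⟨a, bb, ha1, hbb0, hbb1, habcon, habdet⟩ := john_key_det n hn s hs2 hs1
  set v : EuclideanSpace ℝ (Fin n) := s⁻¹ • p with hv_def
  have hp_eq : p = s • v := by rw [hv_def, smul_inv_smul₀ hs0.ne']
  have hv : ‖v‖ = 1 := by
    rw [hv_def, norm_smul, norm_inv, Real.norm_eq_abs, abs_of_pos hs0, ← hs_def]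
    exact inv_mul_cancel₀ hs0.ne'
  obtain ⟨M, hMapp, hMdet⟩ := john_M n hn v hv a bb
  set hull := convexHull ℝ (closedBall (0 : EuclideanSpace ℝ (Fin n)) 1 ∪ {p, -p}) with hhull
  have hhull_sub : hull ⊆ ⇑Teq.symm '' K := by
    refine convexHull_min (union_subset hgoal1 ?_) ?_
    · intro q hq
      rcases hq with hq | hq
      · rw [hq]; exact hpK
      · rw [Set.mem_singleton_iff] at hq
        rw [hq]
        obtain ⟨k, hk, hkeq⟩ := hpK
        refine ⟨-k, ?_, by rw [map_neg, hkeq]⟩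
        rw [hKsymm, Set.mem_neg, neg_neg]
        exact hk
    · have h1 := hKconv.linear_image (Teq.symm : EuclideanSpace ℝ (Fin n) →ₗ[ℝ] EuclideanSpace ℝ (Fin n))
      simpa using h1
  -- the key geometric fact: M maps the unit ball into the hull
  have hMmem : ∀ y ∈ closedBall (0 : EuclideanSpace ℝ (Fin n)) 1, M y ∈ hull := by
    intro y hy
    set c : ℝ := ⟪v, y⟫ with hc_def
    set w : EuclideanSpace ℝ (Fin n) := y - c • v with hw_def
    have hvv : ⟪v, v⟫ = 1 := by
      rw [real_inner_self_eq_norm_sq, hv]; norm_num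
    have hvw : ⟪v, w⟫ = 0 := by
      rw [hw_def, inner_sub_right, real_inner_smul_right, hvv, hc_def]
      ring
    have hy_norm : ‖y‖ ≤ 1 := by rwa [mem_closedBall, dist_zero_right] at hy
    have hy_dec : y = c • v + w := by rw [hw_def]; abel
    have hwy : c^2 + ‖w‖^2 = ‖y‖^2 := by
      conv_rhs => rw [hy_dec]
      rw [norm_add_sq_real, real_inner_smul_left, hvw, norm_smul, Real.norm_eq_abs, hv]
      rw [mul_pow, sq_abs]
      ring
    obtain ⟨t, ht0, ht1, hineq⟩ := john_key_t s a bb |c| (‖w‖^2) hs1 ha1 hbb0 hbb1 habcon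
      (abs_nonneg c) (sq_nonneg _) (by rw [sq_abs]; nlinarith [norm_nonneg y])
    set σ : ℝ := if 0 ≤ c then 1 else -1 with hσ_def
    have hσc : σ * |c| = c := by
      by_cases h : 0 ≤ c
      · simp [hσ_def, h, abs_of_nonneg h]
      · push_neg at h
        simp [hσ_def, not_le.mpr h, abs_of_neg h]
    have hσsq : σ^2 = 1 := by
      by_cases h : 0 ≤ c <;> simp [hσ_def, h]
    set p' : EuclideanSpace ℝ (Fin n) := σ • p with hp'_def
    have hp'_mem : p' ∈ hull := by
      refine subset_convexHull _ _ (Or.inr ?_)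
      by_cases h : 0 ≤ c
      · simp [hp'_def, hσ_def, h]
      · simp [hp'_def, hσ_def, h]
    have hMy : M y = (a*c) • v + bb • w := by rw [hMapp y, hc_def, hw_def]
    have hdiff : M y - t • p' = (a*c - t*(σ*s)) • v + bb • w := by
      rw [hMy, hp'_def, hp_eq, smul_smul, smul_smul]
      module
    have hinner0 : ⟪(a*c - t*(σ*s)) • v, bb • w⟫ = 0 := by
      rw [real_inner_smul_left, real_inner_smul_right, hvw]
      ring
    have hnormsq : ‖M y - t • p'‖^2 = (a*c - t*(σ*s))^2 + bb^2*‖w‖^2 := by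
      rw [hdiff, norm_add_sq_real, hinner0]
      simp only [norm_smul, hv, Real.norm_eq_abs, mul_pow, sq_abs]
      ring
    have hcoef : (a*c - t*(σ*s))^2 = (a*|c| - t*s)^2 := by
      by_cases h : 0 ≤ c
      · simp only [hσ_def, if_pos h, abs_of_nonneg h]; ring
      · push_neg at h
        simp only [hσ_def, if_neg (not_le.mpr h), abs_of_neg h]; ring
    have hle : ‖M y - t • p'‖^2 ≤ (1-t)^2 := by
      rw [hnormsq, hcoef]; exact hineq
    have hle' : ‖M y - t • p'‖ ≤ 1 - t := by
      nlinarith [norm_nonneg (M y - t • p'), ht1]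
    by_cases ht : t = 1
    · have h1 : M y = p' := by
        rw [ht] at hle'
        have h2 : ‖M y - 1 • p'‖ ≤ 0 := by simpa using hle'
        have h3 := norm_le_zero_iff.mp h2
        rw [one_smul, sub_eq_zero] at h3
        exact h3
      rw [h1]; exact hp'_mem
    · have ht1' : t < 1 := lt_of_le_of_ne ht1 ht
      have h2 : (0:ℝ) < 1 - t := by linarith
      set z := (1-t)⁻¹ • (M y - t • p') with hz_def
      have hz : ‖z‖ ≤ 1 := by
        rw [hz_def, norm_smul, Real.norm_eq_abs, abs_of_pos (inv_pos.mpr h2)]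
        calc (1-t)⁻¹ * ‖M y - t • p'‖ ≤ (1-t)⁻¹ * (1-t) :=
              mul_le_mul_of_nonneg_left hle' (inv_nonneg.mpr h2.le)
          _ = 1 := inv_mul_cancel₀ h2.ne'
      have hz_mem : z ∈ hull := subset_convexHull _ _ (Or.inl (by
        rw [mem_closedBall, dist_zero_right]; exact hz))
      have hcomb : M y = t • p' + (1 - t) • z := by
        rw [hz_def, smul_inv_smul₀ h2.ne']
        abel
      rw [hcomb]
      exact (convex_convexHull ℝ _) hp'_mem hz_mem ht0 (by linarith) (by ring)
  -- contradiction with maximality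
  set Mc := LinearMap.toContinuousLinearMap M with hMc
  have hT₂S : T₀.comp Mc ∈ S := by
    intro x hx
    have h1 : M x ∈ ⇑Teq.symm '' K := hhull_sub (hMmem x hx)
    obtain ⟨k, hk, hkeq⟩ := h1
    have h3 : T₀ (M x) = k := by
      rw [← hkeq, ← hTeq_app (Teq.symm k), LinearEquiv.apply_symm_apply]
    have h4 : Mc x = M x := rfl
    simp only [ContinuousLinearMap.comp_apply, h4, h3]
    exact hk
  have hdet2 : |(T₀.comp Mc).det| = |T₀.det| * (a * bb^(n-1)) := by
    have h1 : ((T₀.comp Mc) : EuclideanSpace ℝ (Fin n) →ₗ[ℝ] EuclideanSpace ℝ (Fin n))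
        = (T₀ : EuclideanSpace ℝ (Fin n) →ₗ[ℝ] EuclideanSpace ℝ (Fin n)).comp
          (Mc : EuclideanSpace ℝ (Fin n) →ₗ[ℝ] EuclideanSpace ℝ (Fin n)) := rfl
    have h2 : (Mc : EuclideanSpace ℝ (Fin n) →ₗ[ℝ] EuclideanSpace ℝ (Fin n)) = M :=
      LinearMap.coe_toContinuousLinearMap M
    rw [ContinuousLinearMap.det, h1, h2, LinearMap.det_comp, abs_mul, hMdet,
      abs_of_pos (by linarith : (0:ℝ) < a * bb^(n-1))]
  have hfinal : |(T₀.comp Mc).det| ≤ |T₀.det| := hT₀max hT₂S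
  rw [hdet2] at hfinal
  nlinarith [hT₀det, habdet, hfinal]
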